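/- Let K be a compact convex set, F ⊂ K a closed face, φ: K → F affine continuous with φ|F = id, P(a) = a∘φ, and J = ker(P) = {a ∈ A(K): a|F = 0}. Then for every order unit space E with order unit e and every bounded linear order-preserving map T: E → A(K)/J with T(e) = π(1), the map T' = Φ∘T (where Φ(π(a)) = P(a)) is an order-preserving, norm-preserving lift of T, i.e. π∘T' = T and ‖T'‖ = ‖T‖. -/

import Mathlib

noncomputable instance normCLMQuotient {Z W : Type*} [NormedAddCommGroup Z] [NormedSpace ℝ Z]
    [NormedAddCommGroup W] [NormedSpace ℝ W] (J : Submodule ℝ W) :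
    Norm (Z →L[ℝ] W ⧸ J) := ContinuousLinearMap.hasOpNorm

variable {E : Type*} [AddCommGroup E] [Module ℝ E] [TopologicalSpace E]

/-- The space of affine continuous `W`-valued functions on a set `K ⊆ E`. -/
def affineFns (K : Set E) (W : Type*) [AddCommGroup W] [Module ℝ W] [TopologicalSpace W]
    [IsTopologicalAddGroup W] [ContinuousConstSMul ℝ W] : Submodule ℝ C(K, W) where
  carrier := {f | ∀ (x y : K) (t : ℝ), t ∈ Set.Icc (0:ℝ) 1 →
    ∀ (h : t • (x : E) + (1 - t) • (y : E) ∈ K), f ⟨_, h⟩ = t • f x + (1 - t) • f y}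
  add_mem' := by
    intro f g hf hg x y t ht h
    simp only [ContinuousMap.add_apply, hf x y t ht h, hg x y t ht h, smul_add]
    abel
  zero_mem' := by intro x y t ht h; simp
  smul_mem' := by
    intro c f hf x y t ht h
    simp only [ContinuousMap.smul_apply, hf x y t ht h, smul_add, smul_comm c t, smul_comm c (1-t)]

/-- `F` is a face of the convex set `K`. -/
def IsFaceOf (K F : Set E) : Prop :=
  F ⊆ K ∧ Convex ℝ F ∧ ∀ x ∈ K, ∀ y ∈ K, ∀ t : ℝ, 0 < t → t < 1 →
    t • x + (1 - t) • y ∈ F → x ∈ F ∧ y ∈ F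

/-- The subspace of those affine continuous functions vanishing on `F`. -/
def vanishingOn {K : Set E} {W : Type*} [AddCommGroup W] [Module ℝ W] [TopologicalSpace W]
    [IsTopologicalAddGroup W] [ContinuousConstSMul ℝ W]
    (A : Submodule ℝ C(K, W)) (F : Set E) : Submodule ℝ A where
  carrier := {a | ∀ x : K, (x : E) ∈ F → (a : C(K, W)) x = 0}
  add_mem' := by intro f g hf hg x hx; simp [hf x hx, hg x hx]
  zero_mem' := by intro x hx; simp
  smul_mem' := by intro c f hf x hx; simp [hf x hx]

/-- The data making an ordered normed space into an order unit space: a distinguished order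
unit, compatibility of order with the linear structure, and the norm being the order unit
norm. -/
structure OrderUnitSpaceData (V : Type*) [NormedAddCommGroup V] [NormedSpace ℝ V]
    [PartialOrder V] where
  unit : V
  add_le_add : ∀ x y z : V, x ≤ y → x + z ≤ y + z
  smul_nonneg : ∀ (c : ℝ) (x : V), 0 ≤ c → 0 ≤ x → 0 ≤ c • x
  unit_order_unit : ∀ x : V, ∃ r : ℝ, 0 < r ∧ -(r • unit) ≤ x ∧ x ≤ r • unit
  norm_eq : ∀ x : V, ‖x‖ = sInf {r : ℝ | -(r • unit) ≤ x ∧ x ≤ r • unit}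

noncomputable instance affineFnsNormedAddCommGroup (K : Set E) [CompactSpace K] :
    NormedAddCommGroup (affineFns K ℝ) := Submodule.normedAddCommGroup _

noncomputable instance affineFnsNormedSpace (K : Set E) [CompactSpace K] :
    NormedSpace ℝ (affineFns K ℝ) := Submodule.normedSpace _


theorem aux_le_opNorm {Z W : Type*} [NormedAddCommGroup Z] [NormedSpace ℝ Z]
    [NormedAddCommGroup W] [NormedSpace ℝ W] (J : Submodule ℝ W)
    (T : Z →L[ℝ] W ⧸ J) (z : Z) : ‖T z‖ ≤ ‖T‖ * ‖z‖ := T.le_opNorm z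

theorem aux_opNorm_nonneg {Z W : Type*} [NormedAddCommGroup Z] [NormedSpace ℝ Z]
    [NormedAddCommGroup W] [NormedSpace ℝ W] (J : Submodule ℝ W)
    (T : Z →L[ℝ] W ⧸ J) : 0 ≤ ‖T‖ := ContinuousLinearMap.opNorm_nonneg T

theorem aux_opNorm_le_bound {Z W : Type*} [NormedAddCommGroup Z] [NormedSpace ℝ Z]
    [NormedAddCommGroup W] [NormedSpace ℝ W] (J : Submodule ℝ W)
    (T : Z →L[ℝ] W ⧸ J) {M : ℝ} (hM : 0 ≤ M) (h : ∀ z, ‖T z‖ ≤ M * ‖z‖) : ‖T‖ ≤ M :=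
  ContinuousLinearMap.opNorm_le_bound T hM h

section Aux

variable {E : Type*} [AddCommGroup E] [Module ℝ E] [TopologicalSpace E]

theorem comp_mem_affineFns (K : Set E) (hKconv : Convex ℝ K)
    (φ : K → K) (hφcont : Continuous φ)
    (hφaff : ∀ (x y : K) (t : ℝ), t ∈ Set.Icc (0:ℝ) 1 →
      ∀ (h : t • (x : E) + (1 - t) • (y : E) ∈ K),
        (φ ⟨_, h⟩ : E) = t • (φ x : E) + (1 - t) • (φ y : E))
    (a : affineFns K ℝ) :
    (a : C(K, ℝ)).comp ⟨φ, hφcont⟩ ∈ affineFns K ℝ := by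
  intro x y t ht h
  have hmem : t • ((φ x : K) : E) + (1 - t) • ((φ y : K) : E) ∈ K :=
    hKconv (φ x).2 (φ y).2 ht.1 (by linarith [ht.2]) (by ring)
  have h1 : φ ⟨_, h⟩ = ⟨_, hmem⟩ := Subtype.ext (hφaff x y t ht h)
  have h2 := a.2 (φ x) (φ y) t ht hmem
  simpa [ContinuousMap.comp_apply, h1] using h2

/-- The map `P : a ↦ a ∘ φ` as a linear endomorphism of `affineFns K ℝ`. -/
noncomputable def Pmap (K : Set E) (hKconv : Convex ℝ K)
    (φ : K → K) (hφcont : Continuous φ)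
    (hφaff : ∀ (x y : K) (t : ℝ), t ∈ Set.Icc (0:ℝ) 1 →
      ∀ (h : t • (x : E) + (1 - t) • (y : E) ∈ K),
        (φ ⟨_, h⟩ : E) = t • (φ x : E) + (1 - t) • (φ y : E)) :
    affineFns K ℝ →ₗ[ℝ] affineFns K ℝ where
  toFun a := ⟨(a : C(K, ℝ)).comp ⟨φ, hφcont⟩,
    comp_mem_affineFns K hKconv φ hφcont hφaff a⟩
  map_add' a b := by apply Subtype.ext; ext x; rfl
  map_smul' c a := by apply Subtype.ext; ext x; rfl

end Aux

set_option maxHeartbeats 1000000 in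
/-- With φ : K → F affine continuous, identity on F, P(a) = a∘φ and
J = ker P = {a ∈ A(K) : a|F = 0}: for every order unit space E' with order unit e and every
bounded linear order-preserving T : E' → A(K)/J with T(e) = π(1), the map T' = Φ∘T (where
Φ(π(a)) = P(a)) is an order-preserving, norm-preserving lift of T: π∘T' = T and ‖T'‖ = ‖T‖. -/
theorem stmt_14 [IsTopologicalAddGroup E] [ContinuousSMul ℝ E] [LocallyConvexSpace ℝ E]
    (K F : Set E) (hK : IsCompact K) [CompactSpace K] (hKconv : Convex ℝ K)
    (hF : IsFaceOf K F) (hFclosed : IsClosed F)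
    (φ : K → K) (hφcont : Continuous φ) (hφF : ∀ x : K, (φ x : E) ∈ F)
    (hφaff : ∀ (x y : K) (t : ℝ), t ∈ Set.Icc (0:ℝ) 1 →
      ∀ (h : t • (x : E) + (1 - t) • (y : E) ∈ K),
        (φ ⟨_, h⟩ : E) = t • (φ x : E) + (1 - t) • (φ y : E))
    (hφid : ∀ x : K, (x : E) ∈ F → φ x = x)
    (E' : Type*) [NormedAddCommGroup E'] [NormedSpace ℝ E'] [PartialOrder E']
    (d : OrderUnitSpaceData E')
    (T : E' →L[ℝ] (affineFns K ℝ ⧸ vanishingOn (affineFns K ℝ) F))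
    (hTmono : ∀ z w : E', z ≤ w → ∃ a : affineFns K ℝ,
      (0 : C(K, ℝ)) ≤ (a : C(K, ℝ)) ∧ Submodule.Quotient.mk a = T w - T z)
    (hTunit : ∃ a : affineFns K ℝ, (∀ x : K, (a : C(K, ℝ)) x = 1) ∧
      Submodule.Quotient.mk a = T d.unit) :
    ∃ T' : E' →L[ℝ] affineFns K ℝ,
      (∀ (z : E') (a : affineFns K ℝ), Submodule.Quotient.mk a = T z →
        ∀ x : K, ((T' z : C(K, ℝ)) x) = (a : C(K, ℝ)) (φ x)) ∧
      (∀ z : E',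
        (Submodule.Quotient.mk (T' z) : affineFns K ℝ ⧸ vanishingOn (affineFns K ℝ) F) = T z) ∧
      ‖T'‖ = ‖T‖ ∧
      (∀ z w : E', z ≤ w → (T' z : C(K, ℝ)) ≤ (T' w : C(K, ℝ))) := by
  classical
  have hker : vanishingOn (affineFns K ℝ) F ≤
      LinearMap.ker (Pmap K hKconv φ hφcont hφaff) := by
    intro a ha
    apply Subtype.ext; ext x
    exact ha (φ x) (hφF x)
  have hPapply : ∀ (a : affineFns K ℝ) (x : K),
      ((Pmap K hKconv φ hφcont hφaff a : C(K, ℝ)) x) = (a : C(K, ℝ)) (φ x) :=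
    fun a x => rfl
  have hΦmk : ∀ a : affineFns K ℝ,
      (vanishingOn (affineFns K ℝ) F).liftQ (Pmap K hKconv φ hφcont hφaff) hker
        (Submodule.Quotient.mk a) = Pmap K hKconv φ hφcont hφaff a :=
    fun a => rfl
  have hquot : ∀ a : affineFns K ℝ,
      (Submodule.Quotient.mk (Pmap K hKconv φ hφcont hφaff a) :
        affineFns K ℝ ⧸ vanishingOn (affineFns K ℝ) F) = Submodule.Quotient.mk a := by
    intro a
    rw [Submodule.Quotient.eq]
    intro x hx
    have hφx : φ x = x := hφid x hx
    show ((Pmap K hKconv φ hφcont hφaff a : affineFns K ℝ) : C(K, ℝ)) x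
        - (a : C(K, ℝ)) x = 0
    rw [hPapply a x, hφx, sub_self]
  have hPnorm : ∀ a : affineFns K ℝ, ‖Pmap K hKconv φ hφcont hφaff a‖ ≤ ‖a‖ := by
    intro a
    show ‖((Pmap K hKconv φ hφcont hφaff a : affineFns K ℝ) : C(K, ℝ))‖ ≤ ‖(a : C(K, ℝ))‖
    refine ContinuousMap.norm_le _ (norm_nonneg _) |>.2 fun x => ?_
    rw [hPapply a x]
    exact ContinuousMap.norm_coe_le_norm (a : C(K, ℝ)) (φ x)
  have hΦle : ∀ q : affineFns K ℝ ⧸ vanishingOn (affineFns K ℝ) F,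
      ‖(vanishingOn (affineFns K ℝ) F).liftQ (Pmap K hKconv φ hφcont hφaff) hker q‖
        ≤ ‖q‖ := by
    intro q
    refine le_of_forall_pos_le_add fun ε hε => ?_
    obtain ⟨a, rfl, ha⟩ := Submodule.Quotient.norm_mk_lt q hε
    calc ‖(vanishingOn (affineFns K ℝ) F).liftQ (Pmap K hKconv φ hφcont hφaff) hker
          (Submodule.Quotient.mk a)‖
        = ‖Pmap K hKconv φ hφcont hφaff a‖ := by rw [hΦmk]
      _ ≤ ‖a‖ := hPnorm a
      _ ≤ ‖(Submodule.Quotient.mk a : affineFns K ℝ ⧸ vanishingOn (affineFns K ℝ) F)‖ + ε :=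
          ha.le
  have hTz : ∀ z : E', ‖T z‖ ≤ ‖T‖ * ‖z‖ := fun z =>
    aux_le_opNorm (vanishingOn (affineFns K ℝ) F) T z
  have hbound : ∀ z : E',
      ‖((vanishingOn (affineFns K ℝ) F).liftQ (Pmap K hKconv φ hφcont hφaff) hker).comp
        (T : E' →ₗ[ℝ] affineFns K ℝ ⧸ vanishingOn (affineFns K ℝ) F) z‖ ≤ ‖T‖ * ‖z‖ :=
    fun z => (hΦle (T z)).trans (hTz z)
  refine ⟨LinearMap.mkContinuous _ ‖T‖ hbound, ?_, ?_, ?_, ?_⟩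
  · intro z a ha x
    have h1 : LinearMap.mkContinuous _ ‖T‖ hbound z = Pmap K hKconv φ hφcont hφaff a := by
      show (vanishingOn (affineFns K ℝ) F).liftQ (Pmap K hKconv φ hφcont hφaff) hker (T z)
        = Pmap K hKconv φ hφcont hφaff a
      rw [← ha, hΦmk]
    rw [h1, hPapply]
  · intro z
    obtain ⟨b, hb⟩ := Submodule.Quotient.mk_surjective (vanishingOn (affineFns K ℝ) F) (T z)
    have h1 : LinearMap.mkContinuous _ ‖T‖ hbound z = Pmap K hKconv φ hφcont hφaff b := by
      show (vanishingOn (affineFns K ℝ) F).liftQ (Pmap K hKconv φ hφcont hφaff) hker (T z)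
        = Pmap K hKconv φ hφcont hφaff b
      rw [← hb, hΦmk]
    rw [h1, hquot b, hb]
  · have hπT' : ∀ z : E',
        (Submodule.Quotient.mk (LinearMap.mkContinuous _ ‖T‖ hbound z) :
          affineFns K ℝ ⧸ vanishingOn (affineFns K ℝ) F) = T z := by
      intro z
      obtain ⟨b, hb⟩ := Submodule.Quotient.mk_surjective (vanishingOn (affineFns K ℝ) F) (T z)
      have h1 : LinearMap.mkContinuous _ ‖T‖ hbound z = Pmap K hKconv φ hφcont hφaff b := by
        show (vanishingOn (affineFns K ℝ) F).liftQ (Pmap K hKconv φ hφcont hφaff) hker (T z)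
          = Pmap K hKconv φ hφcont hφaff b
        rw [← hb, hΦmk]
      rw [h1, hquot b, hb]
    have h1 : ‖LinearMap.mkContinuous _ ‖T‖ hbound‖ ≤ ‖T‖ :=
      LinearMap.mkContinuous_norm_le _
        (aux_opNorm_nonneg (vanishingOn (affineFns K ℝ) F) T) hbound
    have h2 : ‖T‖ ≤ ‖LinearMap.mkContinuous _ ‖T‖ hbound‖ := by
      refine aux_opNorm_le_bound (vanishingOn (affineFns K ℝ) F) T
        (ContinuousLinearMap.opNorm_nonneg _) fun z => ?_
      calc ‖T z‖ = ‖(Submodule.Quotient.mk (LinearMap.mkContinuous _ ‖T‖ hbound z) :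
              affineFns K ℝ ⧸ vanishingOn (affineFns K ℝ) F)‖ := by rw [hπT' z]
        _ ≤ ‖LinearMap.mkContinuous _ ‖T‖ hbound z‖ :=
            Submodule.Quotient.norm_mk_le _ _
        _ ≤ ‖LinearMap.mkContinuous _ ‖T‖ hbound‖ * ‖z‖ :=
            (LinearMap.mkContinuous _ ‖T‖ hbound).le_opNorm z
    exact le_antisymm h1 h2
  · intro z w hzw
    obtain ⟨a, ha0, hamk⟩ := hTmono z w hzw
    have hdiff : LinearMap.mkContinuous _ ‖T‖ hbound w - LinearMap.mkContinuous _ ‖T‖ hbound z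
        = Pmap K hKconv φ hφcont hφaff a := by
      show (vanishingOn (affineFns K ℝ) F).liftQ (Pmap K hKconv φ hφcont hφaff) hker (T w)
          - (vanishingOn (affineFns K ℝ) F).liftQ (Pmap K hKconv φ hφcont hφaff) hker (T z)
        = Pmap K hKconv φ hφcont hφaff a
      rw [← map_sub, ← hamk, hΦmk]
    rw [ContinuousMap.le_def]
    intro x
    have h0 : (0 : ℝ) ≤ (a : C(K, ℝ)) (φ x) := ha0 (φ x)
    have h1 : ((LinearMap.mkContinuous _ ‖T‖ hbound w : C(K, ℝ)) x)
        - ((LinearMap.mkContinuous _ ‖T‖ hbound z : C(K, ℝ)) x) = (a : C(K, ℝ)) (φ x) := by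
      have h2 := congrArg (fun b : affineFns K ℝ => (b : C(K, ℝ)) x) hdiff
      simpa [hPapply] using h2
    linarith
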